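/- Let A be a commutative Noetherian ring and I an ideal of the polynomial ring A[x₁,…,xₙ]. Fix 1 ≤ t ≤ n and a monomial order that is an elimination order for x₁,…,x_t. If G is a Gröbner basis of I with respect to this order (meaning the leading terms of elements of G generate the ideal of leading terms of I), then G ∩ A[x_{t+1},…,xₙ] is a Gröbner basis of I ∩ A[x_{t+1},…,xₙ] with respect to the induced order. -/

import Mathlib

open MvPolynomial

/-- `g` is the leading term of `f` with respect to the linear order `ord` on monomials:
some `d` in the support of `f` dominates the support, and `g = monomial d (coeff d f)`. -/
def IsLeadTerm {A : Type*} [CommRing A] {n : ℕ}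
    (ord : LinearOrder ((Fin n) →₀ ℕ)) (f g : MvPolynomial (Fin n) A) : Prop :=
  ∃ d ∈ f.support, (∀ e ∈ f.support, ord.le e d) ∧
    g = MvPolynomial.monomial d (MvPolynomial.coeff d f)

section Aux
variable {A : Type*} [CommRing A] {n : ℕ} (t : ℕ)

noncomputable def killLow : MvPolynomial (Fin n) A →ₐ[A] MvPolynomial (Fin n) A :=
  MvPolynomial.aeval (fun i : Fin n => if t ≤ (i : ℕ) then MvPolynomial.X i else 0)

lemma killLow_monomial_good (d : (Fin n) →₀ ℕ) (a : A)
    (hd : ∀ i : Fin n, (i : ℕ) < t → d i = 0) :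
    killLow t (MvPolynomial.monomial d a) = MvPolynomial.monomial d a := by
  rw [killLow, aeval_monomial]
  have h : (Finsupp.prod d fun i k =>
        (if t ≤ (i : ℕ) then (X i : MvPolynomial (Fin n) A) else 0) ^ k)
      = Finsupp.prod d fun i k => (X i : MvPolynomial (Fin n) A) ^ k := by
    apply Finsupp.prod_congr
    intro i hi
    rw [if_pos]
    by_contra h
    exact (Finsupp.mem_support_iff.mp hi) (hd i (lt_of_not_ge h))
  rw [h, monomial_eq, algebraMap_eq]

lemma killLow_monomial_bad (d : (Fin n) →₀ ℕ) (a : A)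
    (hd : ∃ i : Fin n, (i : ℕ) < t ∧ d i ≠ 0) :
    killLow t (MvPolynomial.monomial d a) = 0 := by
  obtain ⟨i, hit, hdi⟩ := hd
  rw [killLow, aeval_monomial]
  have h : (Finsupp.prod d fun i k =>
        (if t ≤ (i : ℕ) then (X i : MvPolynomial (Fin n) A) else 0) ^ k) = 0 := by
    apply Finset.prod_eq_zero (Finsupp.mem_support_iff.mpr hdi)
    simp only [if_neg (not_le.mpr hit)]
    exact zero_pow hdi
  rw [h, mul_zero]

lemma killLow_mem_supported (p : MvPolynomial (Fin n) A) :
    killLow t p ∈ MvPolynomial.supported A {i : Fin n | t ≤ (i : ℕ)} := by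
  induction p using MvPolynomial.induction_on with
  | C a => rw [show (C a : MvPolynomial (Fin n) A) = algebraMap A _ a from rfl, AlgHom.commutes]
           exact Subalgebra.algebraMap_mem _ a
  | add p q hp hq => rw [map_add]; exact add_mem hp hq
  | mul_X p i hp =>
      rw [map_mul]
      refine mul_mem hp ?_
      have : killLow t (X i : MvPolynomial (Fin n) A)
          = if t ≤ (i : ℕ) then (X i : MvPolynomial (Fin n) A) else 0 := by
        simp [killLow]
      rw [this]
      split
      · exact Algebra.subset_adjoin ⟨i, by assumption, rfl⟩
      · exact zero_mem _

lemma killLow_eq_self (p : MvPolynomial (Fin n) A)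
    (hp : p ∈ MvPolynomial.supported A {i : Fin n | t ≤ (i : ℕ)}) :
    killLow t p = p := by
  have hp' : p ∈ Algebra.adjoin A (MvPolynomial.X '' {i : Fin n | t ≤ (i : ℕ)} :
      Set (MvPolynomial (Fin n) A)) := hp
  clear hp
  induction hp' using Algebra.adjoin_induction with
  | mem x hx =>
      obtain ⟨i, hi, rfl⟩ := hx
      simp only [killLow, aeval_X]
      exact if_pos hi
  | algebraMap a => exact AlgHom.commutes _ a
  | add x y _ _ hx hy => rw [map_add, hx, hy]
  | mul x y _ _ hx hy => rw [map_mul, hx, hy]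

lemma mem_supported_of_support (p : MvPolynomial (Fin n) A)
    (h : ∀ e ∈ p.support, ∀ i : Fin n, (i : ℕ) < t → e i = 0) :
    p ∈ MvPolynomial.supported A {i : Fin n | t ≤ (i : ℕ)} := by
  rw [MvPolynomial.mem_supported]
  intro i hi
  obtain ⟨e, he, hie⟩ := (MvPolynomial.mem_vars i).mp hi
  by_contra hit
  exact (Finsupp.mem_support_iff.mp hie) (h e he i (lt_of_not_ge hit))

end Aux

set_option maxHeartbeats 1000000 in
set_option synthInstance.maxHeartbeats 400000 in
/-- Lemma 3.2 (elimination): let `A` be a commutative Noetherian ring, `I` an ideal of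
`A[x₁,…,xₙ]`, `1 ≤ t ≤ n`, and `ord` a monomial order that is an elimination order for
`x₁,…,x_t` (indices `i` with `i < t`).  If `G ⊆ I` is a finite Gröbner basis of `I`
(the leading terms of elements of `G` generate the leading term ideal of `I`), then
`G ∩ A[x_{t+1},…,xₙ]` is a Gröbner basis of `I ∩ A[x_{t+1},…,xₙ]`, the intersections
being taken in the subalgebra of polynomials supported on the variables `x_{t+1},…,xₙ`,
with respect to the induced order. -/
theorem stmt5 {A : Type*} [CommRing A] [IsNoetherianRing A] {n : ℕ}
    (ord : LinearOrder ((Fin n) →₀ ℕ))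
    (hadd : ∀ a b c : (Fin n) →₀ ℕ, ord.le a b → ord.le (a + c) (b + c))
    (t : ℕ) (ht1 : 1 ≤ t) (htn : t ≤ n)
    (helim : ∀ d e : (Fin n) →₀ ℕ, (∃ i : Fin n, (i : ℕ) < t ∧ d i ≠ 0) →
      (∀ i : Fin n, (i : ℕ) < t → e i = 0) → ord.lt e d)
    (I : Ideal (MvPolynomial (Fin n) A))
    (G : Set (MvPolynomial (Fin n) A)) (hGfin : G.Finite) (hGI : G ⊆ I)
    (hGB : Ideal.span {g | ∃ f ∈ I, IsLeadTerm ord f g}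
         = Ideal.span {g | ∃ f ∈ G, IsLeadTerm ord f g}) :
    -- the subalgebra `A[x_{t+1},…,xₙ]`
    letI Sub := MvPolynomial.supported A {i : Fin n | t ≤ (i : ℕ)}
    -- `I_t = I ∩ A[x_{t+1},…,xₙ]` as an ideal of the subalgebra
    letI It : Ideal Sub := Ideal.comap Sub.val I
    -- `G_t = G ∩ A[x_{t+1},…,xₙ]` is a Gröbner basis of `I_t`
    (∀ g : Sub, (g : MvPolynomial (Fin n) A) ∈ G → g ∈ It) ∧
    Ideal.span {g : Sub | ∃ f : Sub, f ∈ It ∧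
        IsLeadTerm ord (f : MvPolynomial (Fin n) A) (g : MvPolynomial (Fin n) A)}
      = Ideal.span {g : Sub | ∃ f : Sub, (f : MvPolynomial (Fin n) A) ∈ G ∧
        IsLeadTerm ord (f : MvPolynomial (Fin n) A) (g : MvPolynomial (Fin n) A)} := by
  classical
  set Sub := MvPolynomial.supported A {i : Fin n | t ≤ (i : ℕ)} with hSub
  set It : Ideal Sub := Ideal.comap Sub.val I with hIt
  refine ⟨fun g hg => ?_, ?_⟩
  · exact Ideal.mem_comap.mpr (hGI hg)
  apply le_antisymm
  · -- hard direction
    rw [Ideal.span_le]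
    rintro g' ⟨f, hfIt, hlt⟩
    -- lead term of f is in LT(G) span in the big ring
    have hg'big : (g' : MvPolynomial (Fin n) A)
        ∈ Ideal.span {g | ∃ f ∈ G, IsLeadTerm ord f g} := by
      rw [← hGB]
      exact Ideal.subset_span ⟨(f : MvPolynomial (Fin n) A), hfIt, hlt⟩
    obtain ⟨c, hcsupp, hcsum⟩ := Submodule.mem_span_set.mp hg'big
    -- apply killLow to the representation
    have hkill : (g' : MvPolynomial (Fin n) A)
        = ∑ i ∈ c.support, killLow t (c i) * killLow t i := by
      have h1 : killLow t (g' : MvPolynomial (Fin n) A) = (g' : MvPolynomial (Fin n) A) :=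
        killLow_eq_self t _ g'.2
      calc (g' : MvPolynomial (Fin n) A) = killLow t (g' : MvPolynomial (Fin n) A) := h1.symm
        _ = killLow t (c.sum fun i r => r • i) := by rw [hcsum]
        _ = ∑ i ∈ c.support, killLow t (c i) * killLow t i := by
            rw [Finsupp.sum, map_sum]
            exact Finset.sum_congr rfl fun i _ => by rw [smul_eq_mul, map_mul]
    -- the sum, term by term, inside Sub
    set S : Set Sub := {g : Sub | ∃ f : Sub, (f : MvPolynomial (Fin n) A) ∈ G ∧
        IsLeadTerm ord (f : MvPolynomial (Fin n) A) (g : MvPolynomial (Fin n) A)} with hS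
    have hterm : ∀ i ∈ c.support,
        (⟨killLow t (c i) * killLow t i,
          mul_mem (killLow_mem_supported t _) (killLow_mem_supported t _)⟩ : Sub)
          ∈ Ideal.span S := by
      intro i hi
      obtain ⟨g, hgG, d, hd, hdmax, hieq⟩ := hcsupp hi
      by_cases hcase : ∀ j : Fin n, (j : ℕ) < t → d j = 0
      · -- leading monomial is good, so g is in the subalgebra
        have hgSub : g ∈ Sub := by
          apply mem_supported_of_support
          intro e he j hj
          by_contra hej
          exact ((@Preorder.lt_iff_le_not_ge _ ord.toPreorder d e).mp
            (helim e d ⟨j, hj, hej⟩ hcase)).2 (hdmax e he)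
        have hiSub : i ∈ Sub := by
          subst hieq
          apply mem_supported_of_support
          intro e he j hj
          have : e = d := Finset.mem_singleton.mp (MvPolynomial.support_monomial_subset he)
          rw [this]
          exact hcase j hj
        have hkilli : killLow t i = i := killLow_eq_self t i hiSub
        have hmem : (⟨i, hiSub⟩ : Sub) ∈ S :=
          ⟨⟨g, hgSub⟩, hgG, d, hd, hdmax, hieq⟩
        have : (⟨killLow t (c i) * killLow t i,
              mul_mem (killLow_mem_supported t _) (killLow_mem_supported t _)⟩ : Sub)
            = (⟨killLow t (c i), killLow_mem_supported t _⟩ : Sub) * ⟨i, hiSub⟩ := by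
          apply Subtype.ext
          show killLow t (c i) * killLow t i = killLow t (c i) * i
          rw [hkilli]
        rw [this]
        exact Ideal.mul_mem_left _ _ (Ideal.subset_span hmem)
      · push_neg at hcase
        have hkilli : killLow t i = 0 := by
          subst hieq
          exact killLow_monomial_bad t d _
            (by obtain ⟨j, hj1, hj2⟩ := hcase; exact ⟨j, hj1, hj2⟩)
        have : (⟨killLow t (c i) * killLow t i,
              mul_mem (killLow_mem_supported t _) (killLow_mem_supported t _)⟩ : Sub) = 0 := by
          apply Subtype.ext
          show killLow t (c i) * killLow t i = 0
          rw [hkilli, mul_zero]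
        rw [this]
        exact zero_mem _
    have hg'eq : g' = ∑ i ∈ c.support,
        (⟨killLow t (c i) * killLow t i,
          mul_mem (killLow_mem_supported t _) (killLow_mem_supported t _)⟩ : Sub) := by
      apply Subtype.ext
      rw [show ((∑ i ∈ c.support,
        (⟨killLow t (c i) * killLow t i,
          mul_mem (killLow_mem_supported t _) (killLow_mem_supported t _)⟩ : Sub) : Sub) :
          MvPolynomial (Fin n) A)
        = ∑ i ∈ c.support, killLow t (c i) * killLow t i from
          map_sum Sub.val _ c.support]
      exact hkill
    rw [hg'eq]
    exact Ideal.sum_mem _ hterm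
  · -- easy direction
    apply Ideal.span_mono
    rintro g' ⟨f, hfG, hlt⟩
    exact ⟨f, Ideal.mem_comap.mpr (hGI hfG), hlt⟩
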